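/- arXiv:2603.22807 — 6 statements merged into one kernel-verified Lean document; each statement's English description precedes it below -/
import Mathlib

section
/- (Theorem B, positive-tilt case.) For every real λ > 0, the covariance of x and x² under the exponentially tilted Wigner semicircle measure is strictly positive: Cov_λ(x, x²) = E_λ[x³] − E_λ[x]·E_λ[x²] > 0. -/
open intervalIntegral

/-- The exponentially tilted Wigner semicircle weight on `[-1,1]`. -/
noncomputable def tiltW (lam x : ℝ) : ℝ := Real.sqrt (1 - x ^ 2) * Real.exp (lam * x)

/-- The normalization constant `Z(λ)`. -/
noncomputable def tiltZ (lam : ℝ) : ℝ := ∫ x in (-1 : ℝ)..1, tiltW lam x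

/-- The mean `E_λ[f]` under the tilted semicircle measure. -/
noncomputable def tiltE (lam : ℝ) (f : ℝ → ℝ) : ℝ :=
  (tiltZ lam)⁻¹ * ∫ x in (-1 : ℝ)..1, f x * tiltW lam x

/-- The covariance `Cov_λ(f, g)` under the tilted semicircle measure. -/
noncomputable def tiltCov (lam : ℝ) (f g : ℝ → ℝ) : ℝ :=
  tiltE lam (fun x => f x * g x) - tiltE lam f * tiltE lam g

section Aux

open Real Set MeasureTheory

/-- The untilted semicircle factor. -/
noncomputable def tS (x : ℝ) : ℝ := Real.sqrt (1 - x ^ 2)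

@[continuity, fun_prop]
lemma tS_cont : Continuous tS := Real.continuous_sqrt.comp (by continuity)

lemma tS_nonneg (x : ℝ) : 0 ≤ tS x := Real.sqrt_nonneg _

lemma tS_pos {x : ℝ} (h : x ∈ Ioo (-1 : ℝ) 1) : 0 < tS x :=
  Real.sqrt_pos.mpr (by nlinarith [h.1, h.2])

lemma tS_neg (x : ℝ) : tS (-x) = tS x := by simp [tS]

lemma tiltW_eq (lam x : ℝ) : tiltW lam x = tS x * Real.exp (lam * x) := rfl

lemma tiltW_cont (lam : ℝ) : Continuous (tiltW lam) :=
  tS_cont.mul (Real.continuous_exp.comp (continuous_const.mul continuous_id))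

lemma tiltW_pos (lam : ℝ) {x : ℝ} (h : x ∈ Ioo (-1 : ℝ) 1) : 0 < tiltW lam x :=
  mul_pos (tS_pos h) (Real.exp_pos _)

lemma tiltZ_pos (lam : ℝ) : 0 < tiltZ lam := by
  apply intervalIntegral_pos_of_pos_on ((tiltW_cont lam).intervalIntegrable _ _)
  · exact fun x hx => tiltW_pos lam hx
  · norm_num

/-- sign lemma: `t` and `e^{λt} - e^{-λt}` have the same sign when `λ > 0`. -/
lemma exp_diff_sign {lam : ℝ} (hlam : 0 < lam) (t : ℝ) :
    0 ≤ t * (Real.exp (lam * t) - Real.exp (-(lam * t))) := by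
  rcases le_total 0 t with h | h
  · exact mul_nonneg h (sub_nonneg.mpr (Real.exp_le_exp.mpr (by nlinarith)))
  · have h2 : Real.exp (lam * t) ≤ Real.exp (-(lam * t)) := Real.exp_le_exp.mpr (by nlinarith)
    nlinarith

lemma exp_diff_pos {lam : ℝ} (hlam : 0 < lam) {t : ℝ} (ht : 0 < t) :
    0 < Real.exp (lam * t) - Real.exp (-(lam * t)) :=
  sub_pos.mpr (Real.exp_lt_exp.mpr (by nlinarith))

/-- The symmetrized, reflected integrand. -/
noncomputable def tH (lam x y : ℝ) : ℝ :=
  ((x + y) * (Real.exp (lam * (x + y)) - Real.exp (-(lam * (x + y))))) *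
    ((x - y) ^ 2 * (tS x * tS y))

lemma tH_cont (lam : ℝ) : Continuous (Function.uncurry fun y x : ℝ => tH lam x y) := by
  unfold tH Function.uncurry
  fun_prop

lemma tH_nonneg {lam : ℝ} (hlam : 0 < lam) (x y : ℝ) : 0 ≤ tH lam x y :=
  mul_nonneg (exp_diff_sign hlam _)
    (mul_nonneg (sq_nonneg _) (mul_nonneg (tS_nonneg _) (tS_nonneg _)))

lemma key (lam : ℝ) (hlam : 0 < lam) :
    0 < tiltZ lam * (∫ x in (-1 : ℝ)..1, x ^ 3 * tiltW lam x)
      - (∫ x in (-1 : ℝ)..1, x * tiltW lam x) * (∫ x in (-1 : ℝ)..1, x ^ 2 * tiltW lam x) := by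
  set w : ℝ → ℝ := tiltW lam with hw
  have hwc : Continuous w := tiltW_cont lam
  set Z : ℝ := tiltZ lam with hZ
  set A : ℝ := ∫ x in (-1 : ℝ)..1, x ^ 3 * w x with hA
  set B : ℝ := ∫ x in (-1 : ℝ)..1, x * w x with hB
  set C : ℝ := ∫ x in (-1 : ℝ)..1, x ^ 2 * w x with hC
  have hint : ∀ f : ℝ → ℝ, Continuous f → IntervalIntegrable f MeasureTheory.volume (-1) 1 :=
    fun f hf => hf.intervalIntegrable _ _
  -- outer-constant representations
  have e1 : Z * A - B * C
      = ∫ y in (-1 : ℝ)..1, (w y * A - y ^ 2 * w y * B) := by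
    rw [intervalIntegral.integral_sub (hint _ (by fun_prop)) (hint _ (by fun_prop))]
    rw [intervalIntegral.integral_mul_const, intervalIntegral.integral_mul_const]
    have h1 : (∫ y in (-1 : ℝ)..1, y ^ 2 * w y) = C := rfl
    have h2 : (∫ y in (-1 : ℝ)..1, w y) = Z := rfl
    rw [h1, h2]; ring
  have e2 : Z * A - B * C
      = ∫ y in (-1 : ℝ)..1, (y ^ 3 * w y * Z - y * w y * C) := by
    rw [intervalIntegral.integral_sub (hint _ (by fun_prop)) (hint _ (by fun_prop))]
    rw [intervalIntegral.integral_mul_const, intervalIntegral.integral_mul_const]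
    show Z * A - B * C = A * Z - B * C
    ring
  have e3 : 2 * (Z * A - B * C)
      = ∫ y in (-1 : ℝ)..1,
          ((w y * A - y ^ 2 * w y * B) + (y ^ 3 * w y * Z - y * w y * C)) := by
    rw [intervalIntegral.integral_add (hint _ (by fun_prop)) (hint _ (by fun_prop)),
      ← e1, ← e2]; ring
  -- inner representation
  have e4 : ∀ y : ℝ, (w y * A - y ^ 2 * w y * B) + (y ^ 3 * w y * Z - y * w y * C)
      = ∫ x in (-1 : ℝ)..1, (x + y) * (x - y) ^ 2 * (w x * w y) := by
    intro y
    have hcg : (fun x : ℝ => (x + y) * (x - y) ^ 2 * (w x * w y))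
        = fun x => (x ^ 3 * w x - x * w x * y ^ 2 - x ^ 2 * w x * y + w x * y ^ 3) * w y := by
      funext x; ring
    rw [hcg, intervalIntegral.integral_mul_const]
    rw [intervalIntegral.integral_add (by exact ((hint _ (by fun_prop)).sub (hint _ (by fun_prop))).sub (hint _ (by fun_prop))) (hint _ (by fun_prop))]
    rw [intervalIntegral.integral_sub ((hint _ (by fun_prop)).sub (hint _ (by fun_prop))) (hint _ (by fun_prop))]
    rw [intervalIntegral.integral_sub (hint _ (by fun_prop)) (hint _ (by fun_prop))]
    rw [intervalIntegral.integral_mul_const, intervalIntegral.integral_mul_const,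
      intervalIntegral.integral_mul_const]
    have h2 : (∫ x in (-1 : ℝ)..1, w x) = Z := rfl
    rw [h2]; ring
  -- reflection
  have e5 : ∀ y : ℝ, (∫ x in (-1 : ℝ)..1, (x + y) * (x - y) ^ 2 * (w x * w y))
        + (∫ x in (-1 : ℝ)..1, (x + (-y)) * (x - (-y)) ^ 2 * (w x * w (-y)))
      = ∫ x in (-1 : ℝ)..1, tH lam x y := by
    intro y
    have r1 : (∫ x in (-1 : ℝ)..1, (x + (-y)) * (x - (-y)) ^ 2 * (w x * w (-y)))
        = ∫ x in (-1 : ℝ)..1, ((-x) + (-y)) * ((-x) - (-y)) ^ 2 * (w (-x) * w (-y)) := by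
      have h := intervalIntegral.integral_comp_neg
        (fun x : ℝ => (x + (-y)) * (x - (-y)) ^ 2 * (w x * w (-y))) (a := -1) (b := 1)
      simp only [neg_neg] at h
      exact h.symm
    rw [r1, ← intervalIntegral.integral_add (hint _ (by fun_prop)) (hint _ (by fun_prop))]
    apply intervalIntegral.integral_congr
    intro x _
    have hw1 : w x = tS x * Real.exp (lam * x) := rfl
    have hw2 : w y = tS y * Real.exp (lam * y) := rfl
    have hw3 : w (-x) = tS x * Real.exp (-(lam * x)) := by
      show tS (-x) * Real.exp (lam * (-x)) = _
      rw [tS_neg]; ring_nf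
    have hw4 : w (-y) = tS y * Real.exp (-(lam * y)) := by
      show tS (-y) * Real.exp (lam * (-y)) = _
      rw [tS_neg]; ring_nf
    have he1 : Real.exp (lam * x) * Real.exp (lam * y) = Real.exp (lam * (x + y)) := by
      rw [← Real.exp_add]; ring_nf
    have he2 : Real.exp (-(lam * x)) * Real.exp (-(lam * y)) = Real.exp (-(lam * (x + y))) := by
      rw [← Real.exp_add]; ring_nf
    simp only [tH, hw1, hw2, hw3, hw4]
    linear_combination ((x + y) * (x - y) ^ 2 * (tS x * tS y)) * he1
      - ((x + y) * (x - y) ^ 2 * (tS x * tS y)) * he2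
  -- assemble
  have hFcont : Continuous (Function.uncurry fun y x : ℝ => (x + y) * (x - y) ^ 2 * (w x * w y)) := by
    apply Continuous.mul
    · apply Continuous.mul
      · exact (continuous_snd.add continuous_fst)
      · exact ((continuous_snd.sub continuous_fst).pow 2)
    · exact (hwc.comp continuous_snd).mul (hwc.comp continuous_fst)
  have hGcont : Continuous fun y : ℝ => ∫ x in (-1 : ℝ)..1, (x + y) * (x - y) ^ 2 * (w x * w y) :=
    intervalIntegral.continuous_parametric_intervalIntegral_of_continuous' hFcont (-1) 1
  have e6 : 2 * (Z * A - B * C)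
      = ∫ y in (-1 : ℝ)..1, ∫ x in (-1 : ℝ)..1, (x + y) * (x - y) ^ 2 * (w x * w y) := by
    rw [e3]
    exact intervalIntegral.integral_congr fun y _ => e4 y
  -- outer reflection
  have e7 : (∫ y in (-1 : ℝ)..1, ∫ x in (-1 : ℝ)..1, (x + y) * (x - y) ^ 2 * (w x * w y))
      = ∫ y in (-1 : ℝ)..1, ∫ x in (-1 : ℝ)..1, (x + (-y)) * (x - (-y)) ^ 2 * (w x * w (-y)) := by
    have h := intervalIntegral.integral_comp_neg
      (fun y : ℝ => ∫ x in (-1 : ℝ)..1, (x + y) * (x - y) ^ 2 * (w x * w y)) (a := -1) (b := 1)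
    simp only [neg_neg] at h
    exact h.symm
  have e8 : 4 * (Z * A - B * C) = ∫ y in (-1 : ℝ)..1, ∫ x in (-1 : ℝ)..1, tH lam x y := by
    have hsum : (∫ y in (-1 : ℝ)..1,
          ((∫ x in (-1 : ℝ)..1, (x + y) * (x - y) ^ 2 * (w x * w y))
            + ∫ x in (-1 : ℝ)..1, (x + (-y)) * (x - (-y)) ^ 2 * (w x * w (-y))))
        = ∫ y in (-1 : ℝ)..1, ∫ x in (-1 : ℝ)..1, tH lam x y :=
      intervalIntegral.integral_congr fun y _ => e5 y
    have hG2 : IntervalIntegrable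
        (fun y : ℝ => ∫ x in (-1 : ℝ)..1, (x + (-y)) * (x - (-y)) ^ 2 * (w x * w (-y)))
        MeasureTheory.volume (-1) 1 := by
      exact (hGcont.comp continuous_neg).intervalIntegrable _ _
    rw [← hsum, intervalIntegral.integral_add (hGcont.intervalIntegrable _ _) hG2, ← e7, ← e6]
    ring
  -- positivity
  have hgc : Continuous fun y : ℝ => ∫ x in (-1 : ℝ)..1, tH lam x y :=
    intervalIntegral.continuous_parametric_intervalIntegral_of_continuous' (tH_cont lam) (-1) 1
  have hpos : 0 < ∫ y in (-1 : ℝ)..1, ∫ x in (-1 : ℝ)..1, tH lam x y := by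
    apply intervalIntegral.integral_pos (by norm_num) hgc.continuousOn
    · intro y _
      refine intervalIntegral.integral_nonneg (by norm_num) fun x _ => tH_nonneg hlam x y
    · refine ⟨1/2, by norm_num, ?_⟩
      apply intervalIntegral.integral_pos (by norm_num)
      · exact ((tH_cont lam).comp (Continuous.prodMk_right (1/2 : ℝ))).continuousOn
      · exact fun x _ => tH_nonneg hlam x (1/2)
      · refine ⟨3/4, by norm_num, ?_⟩
        apply mul_pos
        · apply mul_pos (by norm_num)
          have : (0:ℝ) < 3/4 + 1/2 := by norm_num
          simpa using exp_diff_pos hlam this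
        · apply mul_pos (by norm_num)
          exact mul_pos (tS_pos (by norm_num)) (tS_pos (by norm_num))
  rw [← e8] at hpos
  linarith
end Aux

/-- Theorem B (positive-tilt case): for every `λ > 0`,
`Cov_λ(x, x²) > 0` under the exponentially tilted Wigner semicircle measure. -/
theorem tiltCov_x_xsq_pos (lam : ℝ) (hlam : 0 < lam) :
    0 < tiltCov lam (fun x => x) (fun x => x ^ 2) := by
  have hZ : 0 < tiltZ lam := tiltZ_pos lam
  have hZne : tiltZ lam ≠ 0 := ne_of_gt hZ
  have hD := key lam hlam
  have h3 : (∫ x in (-1 : ℝ)..1, (x * x ^ 2) * tiltW lam x)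
      = ∫ x in (-1 : ℝ)..1, x ^ 3 * tiltW lam x :=
    intervalIntegral.integral_congr fun x _ => by ring
  have hcov : tiltCov lam (fun x => x) (fun x => x ^ 2)
      = (tiltZ lam)⁻¹ * (tiltZ lam)⁻¹
        * (tiltZ lam * (∫ x in (-1 : ℝ)..1, x ^ 3 * tiltW lam x)
          - (∫ x in (-1 : ℝ)..1, x * tiltW lam x) * (∫ x in (-1 : ℝ)..1, x ^ 2 * tiltW lam x)) := by
    simp only [tiltCov, tiltE]
    rw [h3]
    field_simp
  rw [hcov]
  exact mul_pos (mul_pos (inv_pos.mpr hZ) (inv_pos.mpr hZ)) hD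
end

section
/- (Theorem B, Sato–Tate angle form.) For every real λ > 0, under the tilted Sato–Tate weight on [0,π] the covariance of cos θ and cos 2θ is strictly positive: letting v_λ(θ) = sin²θ · e^{λ cos θ} on [0,π], Y(λ) = ∫_{0}^{π} v_λ(θ) dθ, Ẽ_λ[f] = Y(λ)⁻¹ ∫_{0}^{π} f(θ) v_λ(θ) dθ, one has Ẽ_λ[cos θ · cos 2θ] − Ẽ_λ[cos θ]·Ẽ_λ[cos 2θ] > 0. -/
open intervalIntegral

/-- The exponentially tilted Sato--Tate weight on `[0, π]`. -/
noncomputable def tiltV (lam θ : ℝ) : ℝ := (Real.sin θ) ^ 2 * Real.exp (lam * Real.cos θ)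

/-- The normalization constant `Y(λ)`. -/
noncomputable def tiltY (lam : ℝ) : ℝ := ∫ θ in (0 : ℝ)..Real.pi, tiltV lam θ

/-- The mean `Ẽ_λ[f]` under the tilted Sato--Tate measure. -/
noncomputable def tiltEst (lam : ℝ) (f : ℝ → ℝ) : ℝ :=
  (tiltY lam)⁻¹ * ∫ θ in (0 : ℝ)..Real.pi, f θ * tiltV lam θ

noncomputable def mSt (lam : ℝ) (k : ℕ) : ℝ :=
  ∫ θ in (0 : ℝ)..Real.pi, Real.cos θ ^ k * tiltV lam θ

lemma tiltV_cont (lam : ℝ) : Continuous (tiltV lam) := by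
  unfold tiltV; fun_prop

lemma basis_cont (lam : ℝ) (k : ℕ) :
    Continuous (fun θ => Real.cos θ ^ k * tiltV lam θ) := by
  have := tiltV_cont lam; fun_prop

lemma mSt_neg (lam : ℝ) (k : ℕ) : mSt (-lam) k = (-1 : ℝ) ^ k * mSt lam k := by
  have h := intervalIntegral.integral_comp_sub_left
      (a := (0:ℝ)) (b := Real.pi) (fun θ => Real.cos θ ^ k * tiltV lam θ) Real.pi
  simp only [sub_self, sub_zero] at h
  have h2 : ∀ x : ℝ, Real.cos (Real.pi - x) ^ k * tiltV lam (Real.pi - x)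
      = (-1 : ℝ) ^ k * (Real.cos x ^ k * tiltV (-lam) x) := by
    intro x
    unfold tiltV
    rw [Real.cos_pi_sub, Real.sin_pi_sub, neg_mul, mul_neg, neg_pow]
    ring
  simp only [h2] at h
  rw [intervalIntegral.integral_const_mul] at h
  have h4 : ((-1 : ℝ) ^ k) * ((-1 : ℝ) ^ k) = 1 := by
    rw [← mul_pow]; norm_num
  have h5 : ((-1:ℝ)^k) * mSt (-lam) k = mSt lam k := h
  linear_combination ((-1:ℝ)^k) * h5 - (mSt (-lam) k) * h4

lemma int_comb (lam c1 c2 c3 c4 c5 c6 c7 c8 : ℝ) :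
    (∫ θ in (0:ℝ)..Real.pi,
      (c1 * (Real.cos θ ^ 3 * tiltV lam θ) + c2 * (Real.cos θ ^ 2 * tiltV lam θ)
        + c3 * (Real.cos θ ^ 1 * tiltV lam θ) + c4 * (Real.cos θ ^ 0 * tiltV lam θ)
        + c5 * (Real.cos θ ^ 3 * tiltV (-lam) θ) + c6 * (Real.cos θ ^ 2 * tiltV (-lam) θ)
        + c7 * (Real.cos θ ^ 1 * tiltV (-lam) θ) + c8 * (Real.cos θ ^ 0 * tiltV (-lam) θ)))
    = c1 * mSt lam 3 + c2 * mSt lam 2 + c3 * mSt lam 1 + c4 * mSt lam 0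
      + c5 * mSt (-lam) 3 + c6 * mSt (-lam) 2 + c7 * mSt (-lam) 1 + c8 * mSt (-lam) 0 := by
  rw [integral_add, integral_add, integral_add, integral_add, integral_add, integral_add,
      integral_add]
  · simp only [integral_const_mul]
    unfold mSt
    ring
  all_goals apply Continuous.intervalIntegrable
  all_goals unfold tiltV
  all_goals fun_prop

noncomputable def hhST (lam θ φ : ℝ) : ℝ :=
  (Real.cos θ - Real.cos φ) ^ 2 *
    ((Real.cos θ + Real.cos φ) *
      (Real.exp (lam * (Real.cos θ + Real.cos φ)) -
        Real.exp (-(lam * (Real.cos θ + Real.cos φ))))) *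
    Real.sin θ ^ 2 * Real.sin φ ^ 2

lemma mul_exp_sub_nonneg (lam : ℝ) (hlam : 0 < lam) (x : ℝ) :
    0 ≤ x * (Real.exp (lam * x) - Real.exp (-(lam * x))) := by
  rcases le_total 0 x with hx | hx
  · have h1 : Real.exp (-(lam * x)) ≤ Real.exp (lam * x) :=
      Real.exp_le_exp.mpr (by nlinarith)
    exact mul_nonneg hx (by linarith)
  · have h1 : Real.exp (lam * x) ≤ Real.exp (-(lam * x)) :=
      Real.exp_le_exp.mpr (by nlinarith)
    exact mul_nonneg_of_nonpos_of_nonpos hx (by linarith)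

lemma hhST_nonneg (lam : ℝ) (hlam : 0 < lam) (θ φ : ℝ) : 0 ≤ hhST lam θ φ :=
  mul_nonneg (mul_nonneg (mul_nonneg (sq_nonneg _)
    (mul_exp_sub_nonneg lam hlam _)) (sq_nonneg _)) (sq_nonneg _)

lemma hhST_pos (lam : ℝ) (hlam : 0 < lam) {θ φ : ℝ}
    (hθ : θ ∈ Set.Ioo (Real.pi/6) (Real.pi/4)) (hφ : φ ∈ Set.Ioo (Real.pi/3) (Real.pi/2)) :
    0 < hhST lam θ φ := by
  have hpi := Real.pi_pos
  obtain ⟨hθ1, hθ2⟩ := hθ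
  obtain ⟨hφ1, hφ2⟩ := hφ
  have hsqrt2 : (1:ℝ) < Real.sqrt 2 := by
    nlinarith [Real.sq_sqrt (show (0:ℝ) ≤ 2 by norm_num), Real.sqrt_nonneg 2]
  have hcθ : Real.cos (Real.pi/4) < Real.cos θ :=
    Real.cos_lt_cos_of_nonneg_of_le_pi (by linarith) (by linarith) hθ2
  rw [Real.cos_pi_div_four] at hcθ
  have hcφ1 : Real.cos φ < Real.cos (Real.pi/3) :=
    Real.cos_lt_cos_of_nonneg_of_le_pi (by linarith) (by linarith) hφ1
  rw [Real.cos_pi_div_three] at hcφ1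
  have hcφ0 : 0 < Real.cos φ :=
    Real.cos_pos_of_mem_Ioo ⟨by linarith, hφ2⟩
  have h1 : 0 < Real.cos θ - Real.cos φ := by nlinarith
  have h2 : 0 < Real.cos θ + Real.cos φ := by nlinarith
  have h3 : 0 < Real.exp (lam * (Real.cos θ + Real.cos φ)) -
      Real.exp (-(lam * (Real.cos θ + Real.cos φ))) := by
    have := Real.exp_lt_exp.mpr (show -(lam * (Real.cos θ + Real.cos φ)) <
        lam * (Real.cos θ + Real.cos φ) by nlinarith)
    linarith
  have hsθ : 0 < Real.sin θ := Real.sin_pos_of_pos_of_lt_pi (by linarith) (by linarith)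
  have hsφ : 0 < Real.sin φ := Real.sin_pos_of_pos_of_lt_pi (by linarith) (by linarith)
  unfold hhST
  positivity

noncomputable def innerI (lam φ : ℝ) : ℝ :=
  Real.sin φ ^ 2 * (Real.exp (lam * Real.cos φ) *
      (mSt lam 3 - Real.cos φ * mSt lam 2 - Real.cos φ ^ 2 * mSt lam 1
        + Real.cos φ ^ 3 * mSt lam 0)
    + Real.exp (-(lam * Real.cos φ)) *
      (mSt lam 3 + Real.cos φ * mSt lam 2 - Real.cos φ ^ 2 * mSt lam 1
        - Real.cos φ ^ 3 * mSt lam 0))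

lemma innerI_cont (lam : ℝ) : Continuous (innerI lam) := by
  unfold innerI; fun_prop

lemma inner_eq (lam φ : ℝ) :
    (∫ θ in (0:ℝ)..Real.pi, hhST lam θ φ) = innerI lam φ := by
  have hpt : ∀ θ : ℝ, hhST lam θ φ =
      (Real.sin φ ^ 2 * Real.exp (lam * Real.cos φ)) * (Real.cos θ ^ 3 * tiltV lam θ)
      + (-(Real.sin φ ^ 2 * Real.exp (lam * Real.cos φ) * Real.cos φ)) * (Real.cos θ ^ 2 * tiltV lam θ)
      + (-(Real.sin φ ^ 2 * Real.exp (lam * Real.cos φ) * Real.cos φ ^ 2)) * (Real.cos θ ^ 1 * tiltV lam θ)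
      + (Real.sin φ ^ 2 * Real.exp (lam * Real.cos φ) * Real.cos φ ^ 3) * (Real.cos θ ^ 0 * tiltV lam θ)
      + (-(Real.sin φ ^ 2 * Real.exp (-(lam * Real.cos φ)))) * (Real.cos θ ^ 3 * tiltV (-lam) θ)
      + (Real.sin φ ^ 2 * Real.exp (-(lam * Real.cos φ)) * Real.cos φ) * (Real.cos θ ^ 2 * tiltV (-lam) θ)
      + (Real.sin φ ^ 2 * Real.exp (-(lam * Real.cos φ)) * Real.cos φ ^ 2) * (Real.cos θ ^ 1 * tiltV (-lam) θ)
      + (-(Real.sin φ ^ 2 * Real.exp (-(lam * Real.cos φ)) * Real.cos φ ^ 3)) * (Real.cos θ ^ 0 * tiltV (-lam) θ) := by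
    intro θ
    unfold hhST tiltV
    rw [mul_add lam, Real.exp_add, neg_add, Real.exp_add, neg_mul]
    ring_nf
  calc (∫ θ in (0:ℝ)..Real.pi, hhST lam θ φ)
      = ∫ θ in (0:ℝ)..Real.pi,
        ((Real.sin φ ^ 2 * Real.exp (lam * Real.cos φ)) * (Real.cos θ ^ 3 * tiltV lam θ)
        + (-(Real.sin φ ^ 2 * Real.exp (lam * Real.cos φ) * Real.cos φ)) * (Real.cos θ ^ 2 * tiltV lam θ)
        + (-(Real.sin φ ^ 2 * Real.exp (lam * Real.cos φ) * Real.cos φ ^ 2)) * (Real.cos θ ^ 1 * tiltV lam θ)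
        + (Real.sin φ ^ 2 * Real.exp (lam * Real.cos φ) * Real.cos φ ^ 3) * (Real.cos θ ^ 0 * tiltV lam θ)
        + (-(Real.sin φ ^ 2 * Real.exp (-(lam * Real.cos φ)))) * (Real.cos θ ^ 3 * tiltV (-lam) θ)
        + (Real.sin φ ^ 2 * Real.exp (-(lam * Real.cos φ)) * Real.cos φ) * (Real.cos θ ^ 2 * tiltV (-lam) θ)
        + (Real.sin φ ^ 2 * Real.exp (-(lam * Real.cos φ)) * Real.cos φ ^ 2) * (Real.cos θ ^ 1 * tiltV (-lam) θ)
        + (-(Real.sin φ ^ 2 * Real.exp (-(lam * Real.cos φ)) * Real.cos φ ^ 3)) * (Real.cos θ ^ 0 * tiltV (-lam) θ)) := by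
        exact intervalIntegral.integral_congr (fun θ _ => hpt θ)
    _ = _ := by
        rw [int_comb]
        rw [show mSt (-lam) 3 = (-1:ℝ)^3 * mSt lam 3 from mSt_neg lam 3,
            show mSt (-lam) 2 = (-1:ℝ)^2 * mSt lam 2 from mSt_neg lam 2,
            show mSt (-lam) 1 = (-1:ℝ)^1 * mSt lam 1 from mSt_neg lam 1,
            show mSt (-lam) 0 = (-1:ℝ)^0 * mSt lam 0 from mSt_neg lam 0]
        unfold innerI
        ring

lemma outer_eq (lam : ℝ) :
    (∫ φ in (0:ℝ)..Real.pi, innerI lam φ)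
      = 4 * (mSt lam 0 * mSt lam 3 - mSt lam 1 * mSt lam 2) := by
  have hpt : ∀ φ : ℝ, innerI lam φ =
      (mSt lam 0) * (Real.cos φ ^ 3 * tiltV lam φ)
      + (-(mSt lam 1)) * (Real.cos φ ^ 2 * tiltV lam φ)
      + (-(mSt lam 2)) * (Real.cos φ ^ 1 * tiltV lam φ)
      + (mSt lam 3) * (Real.cos φ ^ 0 * tiltV lam φ)
      + (-(mSt lam 0)) * (Real.cos φ ^ 3 * tiltV (-lam) φ)
      + (-(mSt lam 1)) * (Real.cos φ ^ 2 * tiltV (-lam) φ)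
      + (mSt lam 2) * (Real.cos φ ^ 1 * tiltV (-lam) φ)
      + (mSt lam 3) * (Real.cos φ ^ 0 * tiltV (-lam) φ) := by
    intro φ
    unfold innerI tiltV
    rw [neg_mul]
    ring_nf
  calc (∫ φ in (0:ℝ)..Real.pi, innerI lam φ)
      = ∫ φ in (0:ℝ)..Real.pi,
        ((mSt lam 0) * (Real.cos φ ^ 3 * tiltV lam φ)
        + (-(mSt lam 1)) * (Real.cos φ ^ 2 * tiltV lam φ)
        + (-(mSt lam 2)) * (Real.cos φ ^ 1 * tiltV lam φ)
        + (mSt lam 3) * (Real.cos φ ^ 0 * tiltV lam φ)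
        + (-(mSt lam 0)) * (Real.cos φ ^ 3 * tiltV (-lam) φ)
        + (-(mSt lam 1)) * (Real.cos φ ^ 2 * tiltV (-lam) φ)
        + (mSt lam 2) * (Real.cos φ ^ 1 * tiltV (-lam) φ)
        + (mSt lam 3) * (Real.cos φ ^ 0 * tiltV (-lam) φ)) :=
        intervalIntegral.integral_congr (fun φ _ => hpt φ)
    _ = _ := by
        rw [int_comb]
        rw [show mSt (-lam) 3 = (-1:ℝ)^3 * mSt lam 3 from mSt_neg lam 3,
            show mSt (-lam) 2 = (-1:ℝ)^2 * mSt lam 2 from mSt_neg lam 2,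
            show mSt (-lam) 1 = (-1:ℝ)^1 * mSt lam 1 from mSt_neg lam 1,
            show mSt (-lam) 0 = (-1:ℝ)^0 * mSt lam 0 from mSt_neg lam 0]
        ring

lemma innerI_nonneg (lam : ℝ) (hlam : 0 < lam) (φ : ℝ) : 0 ≤ innerI lam φ := by
  rw [← inner_eq]
  exact intervalIntegral.integral_nonneg Real.pi_pos.le
    (fun θ _ => hhST_nonneg lam hlam θ φ)

lemma innerI_pos (lam : ℝ) (hlam : 0 < lam) {φ : ℝ}
    (hφ : φ ∈ Set.Ioo (Real.pi/3) (Real.pi/2)) : 0 < innerI lam φ := by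
  have hpi := Real.pi_pos
  rw [← inner_eq]
  have hmono : (∫ θ in (Real.pi/6)..(Real.pi/4), hhST lam θ φ)
      ≤ ∫ θ in (0:ℝ)..Real.pi, hhST lam θ φ := by
    apply intervalIntegral.integral_mono_interval (by linarith) (by linarith) (by linarith)
    · exact MeasureTheory.ae_of_all _ (fun θ => hhST_nonneg lam hlam θ φ)
    · apply Continuous.intervalIntegrable
      unfold hhST; fun_prop
  have hpos : 0 < ∫ θ in (Real.pi/6)..(Real.pi/4), hhST lam θ φ := by
    apply intervalIntegral.intervalIntegral_pos_of_pos_on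
    · apply Continuous.intervalIntegrable
      unfold hhST; fun_prop
    · exact fun θ hθ => hhST_pos lam hlam hθ hφ
    · linarith
  linarith

lemma key_pos (lam : ℝ) (hlam : 0 < lam) :
    0 < mSt lam 0 * mSt lam 3 - mSt lam 1 * mSt lam 2 := by
  have hpi := Real.pi_pos
  have hmono : (∫ φ in (Real.pi/3)..(Real.pi/2), innerI lam φ)
      ≤ ∫ φ in (0:ℝ)..Real.pi, innerI lam φ := by
    apply intervalIntegral.integral_mono_interval (by linarith) (by linarith) (by linarith)
    · exact MeasureTheory.ae_of_all _ (fun φ => innerI_nonneg lam hlam φ)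
    · exact (innerI_cont lam).intervalIntegrable 0 Real.pi
  have hpos : 0 < ∫ φ in (Real.pi/3)..(Real.pi/2), innerI lam φ := by
    apply intervalIntegral.intervalIntegral_pos_of_pos_on
    · exact (innerI_cont lam).intervalIntegrable _ _
    · exact fun φ hφ => innerI_pos lam hlam hφ
    · linarith
  have h := outer_eq lam
  linarith

lemma mSt0_pos (lam : ℝ) : 0 < mSt lam 0 := by
  have hpi := Real.pi_pos
  apply intervalIntegral.intervalIntegral_pos_of_pos_on
  · exact (basis_cont lam 0).intervalIntegrable _ _
  · intro θ hθ
    have hs : 0 < Real.sin θ := Real.sin_pos_of_pos_of_lt_pi hθ.1 hθ.2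
    unfold tiltV
    positivity
  · exact hpi

lemma tiltY_eq (lam : ℝ) : tiltY lam = mSt lam 0 := by
  unfold tiltY mSt
  apply intervalIntegral.integral_congr
  intro θ _
  simp

/-- Theorem B (Sato--Tate angle form): for every `λ > 0`, under the tilted
Sato--Tate weight on `[0, π]` the covariance of `cos θ` and `cos 2θ` is
strictly positive. -/
theorem tiltCov_cos_cos2_pos (lam : ℝ) (hlam : 0 < lam) :
    0 < tiltEst lam (fun θ => Real.cos θ * Real.cos (2 * θ)) -
        tiltEst lam (fun θ => Real.cos θ) * tiltEst lam (fun θ => Real.cos (2 * θ)) := by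
  have e1 : (∫ θ in (0:ℝ)..Real.pi, (fun θ => Real.cos θ * Real.cos (2 * θ)) θ * tiltV lam θ)
      = 2 * mSt lam 3 - mSt lam 1 := by
    have hpt : ∀ θ : ℝ, (Real.cos θ * Real.cos (2 * θ)) * tiltV lam θ =
        (2:ℝ) * (Real.cos θ ^ 3 * tiltV lam θ) + (0:ℝ) * (Real.cos θ ^ 2 * tiltV lam θ)
        + (-1:ℝ) * (Real.cos θ ^ 1 * tiltV lam θ) + (0:ℝ) * (Real.cos θ ^ 0 * tiltV lam θ)
        + (0:ℝ) * (Real.cos θ ^ 3 * tiltV (-lam) θ) + (0:ℝ) * (Real.cos θ ^ 2 * tiltV (-lam) θ)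
        + (0:ℝ) * (Real.cos θ ^ 1 * tiltV (-lam) θ) + (0:ℝ) * (Real.cos θ ^ 0 * tiltV (-lam) θ) := by
      intro θ
      rw [Real.cos_two_mul]
      ring
    rw [intervalIntegral.integral_congr (fun θ _ => hpt θ), int_comb]
    ring
  have e2 : (∫ θ in (0:ℝ)..Real.pi, (fun θ => Real.cos θ) θ * tiltV lam θ) = mSt lam 1 := by
    have hpt : ∀ θ : ℝ, Real.cos θ * tiltV lam θ =
        (0:ℝ) * (Real.cos θ ^ 3 * tiltV lam θ) + (0:ℝ) * (Real.cos θ ^ 2 * tiltV lam θ)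
        + (1:ℝ) * (Real.cos θ ^ 1 * tiltV lam θ) + (0:ℝ) * (Real.cos θ ^ 0 * tiltV lam θ)
        + (0:ℝ) * (Real.cos θ ^ 3 * tiltV (-lam) θ) + (0:ℝ) * (Real.cos θ ^ 2 * tiltV (-lam) θ)
        + (0:ℝ) * (Real.cos θ ^ 1 * tiltV (-lam) θ) + (0:ℝ) * (Real.cos θ ^ 0 * tiltV (-lam) θ) := by
      intro θ; ring
    rw [intervalIntegral.integral_congr (fun θ _ => hpt θ), int_comb]
    ring
  have e3 : (∫ θ in (0:ℝ)..Real.pi, (fun θ => Real.cos (2 * θ)) θ * tiltV lam θ)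
      = 2 * mSt lam 2 - mSt lam 0 := by
    have hpt : ∀ θ : ℝ, Real.cos (2 * θ) * tiltV lam θ =
        (0:ℝ) * (Real.cos θ ^ 3 * tiltV lam θ) + (2:ℝ) * (Real.cos θ ^ 2 * tiltV lam θ)
        + (0:ℝ) * (Real.cos θ ^ 1 * tiltV lam θ) + (-1:ℝ) * (Real.cos θ ^ 0 * tiltV lam θ)
        + (0:ℝ) * (Real.cos θ ^ 3 * tiltV (-lam) θ) + (0:ℝ) * (Real.cos θ ^ 2 * tiltV (-lam) θ)
        + (0:ℝ) * (Real.cos θ ^ 1 * tiltV (-lam) θ) + (0:ℝ) * (Real.cos θ ^ 0 * tiltV (-lam) θ) := by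
      intro θ
      rw [Real.cos_two_mul]
      ring
    rw [intervalIntegral.integral_congr (fun θ _ => hpt θ), int_comb]
    ring
  have hY : 0 < mSt lam 0 := mSt0_pos lam
  have hkey := key_pos lam hlam
  unfold tiltEst
  rw [e1, e2, e3, tiltY_eq]
  have expr : (mSt lam 0)⁻¹ * (2 * mSt lam 3 - mSt lam 1)
      - (mSt lam 0)⁻¹ * mSt lam 1 * ((mSt lam 0)⁻¹ * (2 * mSt lam 2 - mSt lam 0))
      = 2 * ((mSt lam 0)⁻¹ * (mSt lam 0)⁻¹)
        * (mSt lam 0 * mSt lam 3 - mSt lam 1 * mSt lam 2) := by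
    field_simp
    ring
  rw [expr]
  positivity
end

section
/- (Bessel recurrence I₀′ = I₁ in integral form.) For every real z, the function B₀ is differentiable at z with derivative z·B₁(z): HasDerivAt B₀ (z·B₁(z)) z. Equivalently, ∫_{−1}^{1} t·e^{zt}·(1 − t²)^{−1/2} dt = z·∫_{−1}^{1} e^{zt}·√(1 − t²) dt. -/
open intervalIntegral

/-- `B₀(z) = ∫_{−1}^{1} e^{zt} (1 − t²)^{−1/2} dt`, so that `I₀(z) = B₀(z)/π`. -/
noncomputable def B0 (z : ℝ) : ℝ :=
  ∫ t in (-1 : ℝ)..1, Real.exp (z * t) * (1 - t ^ 2) ^ (-(1 / 2) : ℝ)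

/-- `B₁(z) = ∫_{−1}^{1} e^{zt} √(1 − t²) dt`, so that `I₁(z) = z·B₁(z)/π`. -/
noncomputable def B1 (z : ℝ) : ℝ :=
  ∫ t in (-1 : ℝ)..1, Real.exp (z * t) * Real.sqrt (1 - t ^ 2)

open Real Set MeasureTheory Filter Metric

lemma aux_meas_base : Measurable (fun t : ℝ => (1 - t ^ 2) ^ (-(1 / 2) : ℝ)) := by
  measurability

lemma aux_int01 : IntervalIntegrable (fun t : ℝ => (1 - t ^ 2) ^ (-(1 / 2) : ℝ))
    MeasureTheory.volume 0 1 := by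
  have hI : IntervalIntegrable (fun x : ℝ => (1 - x) ^ (-(1 / 2) : ℝ))
      MeasureTheory.volume 0 1 := by
    have := (intervalIntegrable_rpow' (a := 0) (b := 1) (r := -(1/2)) (by norm_num)).comp_sub_left 1
    simpa using this.symm
  refine hI.mono_fun' aux_meas_base.aestronglyMeasurable ?_
  filter_upwards [MeasureTheory.ae_restrict_mem measurableSet_uIoc] with t ht
  rw [Set.uIoc_of_le (by norm_num : (0:ℝ) ≤ 1)] at ht
  have h1 : (0:ℝ) ≤ 1 - t := by nlinarith [ht.1, ht.2]
  have h2 : (0:ℝ) ≤ 1 + t := by nlinarith [ht.1]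
  have he : (1 - t ^ 2 : ℝ) = (1 - t) * (1 + t) := by ring
  rw [Real.norm_eq_abs, abs_of_nonneg (Real.rpow_nonneg (by nlinarith [ht.1, ht.2]) _), he,
    Real.mul_rpow h1 h2]
  exact mul_le_of_le_one_right (Real.rpow_nonneg h1 _)
    (Real.rpow_le_one_of_one_le_of_nonpos (by linarith [ht.1]) (by norm_num))

lemma aux_int : IntervalIntegrable (fun t : ℝ => (1 - t ^ 2) ^ (-(1 / 2) : ℝ))
    MeasureTheory.volume (-1) 1 := by
  have hneg : IntervalIntegrable (fun t : ℝ => (1 - t ^ 2) ^ (-(1 / 2) : ℝ))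
      MeasureTheory.volume (-1) 0 := by
    have := (IntervalIntegrable.iff_comp_neg (by finiteness)).mp aux_int01
    simpa using this.symm
  exact hneg.trans aux_int01


/-- Bessel recurrence `I₀′ = I₁` in integral form: `B₀` is differentiable at
every real `z` with derivative `z·B₁(z)`. -/
theorem hasDerivAt_B0 (z : ℝ) : HasDerivAt B0 (z * B1 z) z := by
  set c : ℝ → ℝ := fun t => (1 - t ^ 2) ^ (-(1 / 2) : ℝ) with hc
  -- Step 1: differentiate under the integral sign
  have step1 :
      IntervalIntegrable (fun t => t * Real.exp (z * t) * c t) MeasureTheory.volume (-1) 1 ∧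
      HasDerivAt (fun x => ∫ t in (-1:ℝ)..1, Real.exp (x * t) * c t)
        (∫ t in (-1:ℝ)..1, t * Real.exp (z * t) * c t) z := by
    apply intervalIntegral.hasDerivAt_integral_of_dominated_loc_of_deriv_le
      (F := fun x t => Real.exp (x * t) * c t)
      (F' := fun x t => t * Real.exp (x * t) * c t)
      (bound := fun t => Real.exp (|z| + 1) * c t) (s := ball z 1) (ball_mem_nhds z one_pos)
    · filter_upwards with x
      exact ((Real.continuous_exp.comp (continuous_const.mul continuous_id)).measurable.mul
        aux_meas_base).aestronglyMeasurable
    · refine (aux_int.const_mul (Real.exp |z|)).mono_fun'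
        (((Real.continuous_exp.comp (continuous_const.mul continuous_id)).measurable.mul
          aux_meas_base).aestronglyMeasurable) ?_
      filter_upwards [MeasureTheory.ae_restrict_mem measurableSet_uIoc] with t ht
      rw [Set.uIoc_of_le (by norm_num : (-1:ℝ) ≤ 1)] at ht
      have hcn : 0 ≤ c t := Real.rpow_nonneg (by nlinarith [ht.1, ht.2] : (0:ℝ) ≤ 1 - t ^ 2) _
      rw [Real.norm_eq_abs, abs_of_nonneg (by positivity)]
      have : Real.exp (z * t) ≤ Real.exp |z| := by
        apply Real.exp_le_exp.2
        calc z * t ≤ |z * t| := le_abs_self _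
          _ = |z| * |t| := abs_mul _ _
          _ ≤ |z| * 1 := by
              apply mul_le_mul_of_nonneg_left _ (abs_nonneg z)
              rw [abs_le]; exact ⟨ht.1.le, ht.2⟩
          _ = |z| := mul_one _
      exact mul_le_mul_of_nonneg_right this hcn
    · exact ((measurable_id'.mul
        (Real.continuous_exp.comp (continuous_const.mul continuous_id)).measurable).mul
        aux_meas_base).aestronglyMeasurable
    · filter_upwards with t ht x hx
      rw [Set.uIoc_of_le (by norm_num : (-1:ℝ) ≤ 1)] at ht
      have hcn : 0 ≤ c t := Real.rpow_nonneg (by nlinarith [ht.1, ht.2] : (0:ℝ) ≤ 1 - t ^ 2) _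
      have ht1 : |t| ≤ 1 := by rw [abs_le]; exact ⟨ht.1.le, ht.2⟩
      have hx1 : |x| ≤ |z| + 1 := by
        have := mem_ball_iff_norm.mp hx
        calc |x| = |z + (x - z)| := by ring_nf
          _ ≤ |z| + |x - z| := abs_add_le _ _
          _ ≤ |z| + 1 := by rw [Real.norm_eq_abs] at this; linarith
      rw [Real.norm_eq_abs, abs_mul, abs_mul, abs_of_nonneg (Real.exp_nonneg _),
        abs_of_nonneg hcn]
      have hexp : Real.exp (x * t) ≤ Real.exp (|z| + 1) := by
        apply Real.exp_le_exp.2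
        calc x * t ≤ |x * t| := le_abs_self _
          _ = |x| * |t| := abs_mul _ _
          _ ≤ (|z| + 1) * 1 := by
              apply mul_le_mul hx1 ht1 (abs_nonneg t) (by positivity)
          _ = |z| + 1 := mul_one _
      calc |t| * Real.exp (x * t) * c t ≤ 1 * Real.exp (|z| + 1) * c t := by
            apply mul_le_mul_of_nonneg_right _ hcn
            exact mul_le_mul ht1 hexp (Real.exp_nonneg _) zero_le_one
        _ = Real.exp (|z| + 1) * c t := by ring
    · exact aux_int.const_mul _
    · filter_upwards with t ht x hx
      have h := (((hasDerivAt_id x).mul_const t).exp).mul_const (c t)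
      refine h.congr_deriv ?_
      simp only [id_eq]
      ring
  -- Step 2: integration by parts
  have h0' : ∀ t : ℝ, t ∈ Ioo (-1:ℝ) 1 → (0:ℝ) < 1 - t ^ 2 := by
    intro t ht; nlinarith [ht.1, ht.2]
  set g : ℝ → ℝ := fun t => -(Real.exp (z * t) * Real.sqrt (1 - t ^ 2)) with hg
  set f' : ℝ → ℝ :=
    fun t => t * Real.exp (z * t) * c t - z * (Real.exp (z * t) * Real.sqrt (1 - t ^ 2)) with hf'
  have hcont2 : Continuous fun t : ℝ => z * (Real.exp (z * t) * Real.sqrt (1 - t ^ 2)) := by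
    continuity
  have hint2 : IntervalIntegrable (fun t : ℝ => z * (Real.exp (z * t) * Real.sqrt (1 - t ^ 2)))
      MeasureTheory.volume (-1) 1 := hcont2.intervalIntegrable _ _
  have parts : (∫ t in (-1:ℝ)..1, f' t) = 0 := by
    have hgcont : Continuous g := by
      apply Continuous.neg; continuity
    have ha : Tendsto g (nhdsWithin (-1) (Ioi (-1))) (nhds 0) := by
      have := (hgcont.tendsto (-1)).mono_left (nhdsWithin_le_nhds (s := Ioi (-1)))
      simpa [hg] using this
    have hb : Tendsto g (nhdsWithin 1 (Iio 1)) (nhds 0) := by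
      have := (hgcont.tendsto 1).mono_left (nhdsWithin_le_nhds (s := Iio 1))
      simpa [hg] using this
    have hderiv : ∀ t ∈ Ioo (-1:ℝ) 1, HasDerivAt g (f' t) t := by
      intro t ht
      have h0 := h0' t ht
      have hsqpos : 0 < Real.sqrt (1 - t ^ 2) := Real.sqrt_pos.2 h0
      have hsq : HasDerivAt (fun s : ℝ => Real.sqrt (1 - s ^ 2))
          (1 / (2 * Real.sqrt (1 - t ^ 2)) * (0 - 2 * t ^ 1)) t := by
        exact (Real.hasDerivAt_sqrt h0.ne').comp t
          ((hasDerivAt_const t (1:ℝ)).sub (hasDerivAt_pow 2 t))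
      have hexp : HasDerivAt (fun s : ℝ => Real.exp (z * s)) (Real.exp (z * t) * z) t := by
        simpa using ((hasDerivAt_id t).const_mul z).exp
      have := (hexp.mul hsq).neg
      refine this.congr_deriv ?_
      have hcv : c t = (Real.sqrt (1 - t ^ 2))⁻¹ := by
        show (1 - t ^ 2 : ℝ) ^ (-(1 / 2) : ℝ) = (Real.sqrt (1 - t ^ 2))⁻¹
        rw [Real.rpow_neg h0.le, Real.sqrt_eq_rpow]
      simp only [hf', hcv]
      field_simp
      ring
    have hint : IntervalIntegrable f' MeasureTheory.volume (-1) 1 := step1.1.sub hint2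
    have := intervalIntegral.integral_eq_sub_of_hasDerivAt_of_tendsto
      (by norm_num : (-1:ℝ) < 1) hderiv hint ha hb
    simpa using this
  have hsplit : (∫ t in (-1:ℝ)..1, f' t)
      = (∫ t in (-1:ℝ)..1, t * Real.exp (z * t) * c t)
        - ∫ t in (-1:ℝ)..1, z * (Real.exp (z * t) * Real.sqrt (1 - t ^ 2)) :=
    intervalIntegral.integral_sub step1.1 hint2
  have key : (∫ t in (-1:ℝ)..1, t * Real.exp (z * t) * c t) = z * B1 z := by
    have h2 : (∫ t in (-1:ℝ)..1, z * (Real.exp (z * t) * Real.sqrt (1 - t ^ 2))) = z * B1 z := by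
      rw [B1, intervalIntegral.integral_const_mul]
    rw [hsplit] at parts
    linarith [parts, h2]
  have final := step1.2
  rw [key] at final
  exact final
end

section
/- (Bessel recurrence I₁′ = I₀ − I₁/z in integral form.) For every real z ≠ 0, the function B₁ is differentiable at z with derivative (B₀(z) − 2·B₁(z))/z: HasDerivAt B₁ ((B₀(z) − 2·B₁(z))/z) z. Equivalently, z·∫_{−1}^{1} t·e^{zt}·√(1 − t²) dt = ∫_{−1}^{1} e^{zt}·(1 − t²)^{−1/2} dt − 2·∫_{−1}^{1} e^{zt}·√(1 − t²) dt. -/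
open intervalIntegral

open MeasureTheory Metric Set Filter in
lemma phi_intInt : IntervalIntegrable (fun t : ℝ => (Real.sqrt (1 - t^2))⁻¹)
    MeasureTheory.volume (-1) 1 := by
  apply intervalIntegrable_deriv_of_nonneg (g := Real.arcsin)
  · exact Real.continuous_arcsin.continuousOn
  · intro x hx
    simp only [min_eq_left (by norm_num : (-1:ℝ) ≤ 1),
      max_eq_right (by norm_num : (-1:ℝ) ≤ 1)] at hx
    simpa [one_div] using Real.hasDerivAt_arcsin (ne_of_gt hx.1) (ne_of_lt hx.2)
  · intro x _
    positivity

open MeasureTheory Metric Set Filter in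
lemma exp_phi_intInt (z : ℝ) :
    IntervalIntegrable (fun t : ℝ => Real.exp (z*t) * (Real.sqrt (1 - t^2))⁻¹)
      MeasureTheory.volume (-1) 1 := by
  apply IntervalIntegrable.mono_fun' (g := fun t : ℝ => Real.exp |z| * (Real.sqrt (1 - t^2))⁻¹)
  · exact phi_intInt.const_mul _
  · apply Measurable.aestronglyMeasurable
    exact (Real.measurable_exp.comp (measurable_const.mul measurable_id)).mul
      ((Real.continuous_sqrt.comp (by continuity)).measurable.inv)
  · rw [Filter.EventuallyLE, MeasureTheory.ae_restrict_iff' measurableSet_uIoc]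
    apply MeasureTheory.ae_of_all
    intro x hx
    rw [Set.uIoc_of_le (by norm_num : (-1:ℝ) ≤ 1)] at hx
    have hx1 : |x| ≤ 1 := abs_le.2 ⟨hx.1.le, hx.2⟩
    have h1 : z * x ≤ |z| := by
      calc z * x ≤ |z * x| := le_abs_self _
        _ = |z| * |x| := abs_mul z x
        _ ≤ |z| * 1 := by gcongr
        _ = |z| := mul_one _
    have : ‖Real.exp (z*x) * (Real.sqrt (1 - x^2))⁻¹‖
        = Real.exp (z*x) * (Real.sqrt (1 - x^2))⁻¹ := by
      rw [Real.norm_eq_abs, abs_of_nonneg]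
      positivity
    rw [this]
    exact mul_le_mul_of_nonneg_right (Real.exp_le_exp.2 h1) (by positivity)

open MeasureTheory Metric Set Filter in
lemma key_ibp (z : ℝ) :
    (∫ t in (-1:ℝ)..1, (2 * (Real.exp (z*t) * Real.sqrt (1 - t^2))
      + z * (t * Real.exp (z*t) * Real.sqrt (1 - t^2))
      - Real.exp (z*t) * (Real.sqrt (1 - t^2))⁻¹)) = 0 := by
  have h := intervalIntegral.integral_eq_sub_of_hasDeriv_right_of_le
    (f := fun t : ℝ => t * Real.exp (z*t) * Real.sqrt (1 - t^2))
    (f' := fun t : ℝ => 2 * (Real.exp (z*t) * Real.sqrt (1 - t^2))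
      + z * (t * Real.exp (z*t) * Real.sqrt (1 - t^2))
      - Real.exp (z*t) * (Real.sqrt (1 - t^2))⁻¹)
    (by norm_num : (-1:ℝ) ≤ 1) ?cont ?deriv ?int
  · rw [h]; norm_num
  case cont =>
    apply Continuous.continuousOn
    exact (continuous_id.mul (Real.continuous_exp.comp (continuous_const.mul continuous_id))).mul
      (Real.continuous_sqrt.comp (by continuity))
  case deriv =>
    intro t ht
    apply HasDerivAt.hasDerivWithinAt
    have h1t : (0:ℝ) < 1 - t^2 := by nlinarith [ht.1, ht.2]
    have hs : Real.sqrt (1 - t^2) ≠ 0 := by positivity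
    have hsq : Real.sqrt (1 - t^2) ^ 2 = 1 - t^2 := Real.sq_sqrt h1t.le
    have hin : HasDerivAt (fun t : ℝ => 1 - t^2) (-(2*t)) t := by
      simpa using ((hasDerivAt_pow 2 t).const_sub 1)
    have h2 : HasDerivAt (fun t : ℝ => Real.sqrt (1 - t^2))
        (-(2*t) / (2 * Real.sqrt (1 - t^2))) t := hin.sqrt (by simpa using h1t.ne')
    have hexp : HasDerivAt (fun t : ℝ => Real.exp (z*t)) (Real.exp (z*t) * z) t := by
      simpa using ((hasDerivAt_id t).const_mul z).exp
    have h1 : HasDerivAt (fun t : ℝ => t * Real.exp (z*t))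
        (1 * Real.exp (z*t) + t * (Real.exp (z*t) * z)) t := (hasDerivAt_id t).mul hexp
    have hf := h1.mul h2
    convert hf using 1
    case e'_4 => rfl
    case e'_8 => rfl
    field_simp
    ring_nf
    linear_combination hsq
  case int =>
    exact (((Continuous.intervalIntegrable (by continuity) _ _).const_mul 2).add
      ((Continuous.intervalIntegrable (by continuity) _ _).const_mul z)).sub (exp_phi_intInt z)

open MeasureTheory Metric Set Filter in
/-- Bessel recurrence `I₁′ = I₀ − I₁/z` in integral form: for `z ≠ 0`, `B₁` is
differentiable at `z` with derivative `(B₀(z) − 2·B₁(z))/z`. -/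
theorem hasDerivAt_B1 (z : ℝ) (hz : z ≠ 0) :
    HasDerivAt B1 ((B0 z - 2 * B1 z) / z) z := by
  have hd : HasDerivAt B1 (∫ t in (-1:ℝ)..1, t * Real.exp (z * t) * Real.sqrt (1 - t ^ 2)) z := by
    have H := (intervalIntegral.hasDerivAt_integral_of_dominated_loc_of_deriv_le
      (F := fun x t => Real.exp (x * t) * Real.sqrt (1 - t ^ 2))
      (F' := fun x t => t * Real.exp (x * t) * Real.sqrt (1 - t ^ 2))
      (x₀ := z) (a := -1) (b := 1) (bound := fun _ => Real.exp (|z| + 1))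
      (μ := MeasureTheory.volume) (ball_mem_nhds z one_pos)
      (Filter.Eventually.of_forall fun x =>
        (Continuous.aestronglyMeasurable (by continuity)))
      (Continuous.intervalIntegrable (by continuity) _ _)
      (Continuous.aestronglyMeasurable (by continuity))
      ?_ ((continuous_const (y := Real.exp (|z| + 1))).intervalIntegrable _ _) ?_).2
    · exact H
    · apply MeasureTheory.ae_of_all
      intro t ht x hx
      rw [Set.uIoc_of_le (by norm_num : (-1:ℝ) ≤ 1)] at ht
      have ht1 : |t| ≤ 1 := abs_le.2 ⟨ht.1.le, ht.2⟩
      have hx1 : |x| ≤ |z| + 1 := by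
        have := mem_ball_iff_norm.1 hx
        rw [Real.norm_eq_abs] at this
        calc |x| = |z + (x - z)| := by ring_nf
          _ ≤ |z| + |x - z| := abs_add_le _ _
          _ ≤ |z| + 1 := by linarith
      have hxt : x * t ≤ |z| + 1 := by
        calc x * t ≤ |x * t| := le_abs_self _
          _ = |x| * |t| := abs_mul _ _
          _ ≤ (|z| + 1) * 1 := by
              apply mul_le_mul hx1 ht1 (abs_nonneg t) (by positivity)
          _ = |z| + 1 := mul_one _
      have hsle : Real.sqrt (1 - t ^ 2) ≤ 1 :=
        Real.sqrt_le_one.2 (by nlinarith [sq_abs t, ht1])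
      calc ‖t * Real.exp (x * t) * Real.sqrt (1 - t ^ 2)‖
          = |t| * Real.exp (x * t) * Real.sqrt (1 - t ^ 2) := by
            rw [Real.norm_eq_abs, abs_mul, abs_mul, abs_of_nonneg (Real.exp_pos _).le,
              abs_of_nonneg (Real.sqrt_nonneg _)]
        _ ≤ 1 * Real.exp (|z| + 1) * 1 := by
            apply mul_le_mul (mul_le_mul ht1 (Real.exp_le_exp.2 hxt) (Real.exp_pos _).le
              (by norm_num)) hsle (Real.sqrt_nonneg _) (by positivity)
        _ = Real.exp (|z| + 1) := by ring
    · apply MeasureTheory.ae_of_all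
      intro t _ x _
      have : HasDerivAt (fun x : ℝ => Real.exp (x * t)) (Real.exp (x * t) * t) x := by
        simpa using ((hasDerivAt_id x).mul_const t).exp
      simpa [mul_comm, mul_assoc, mul_left_comm] using this.mul_const (Real.sqrt (1 - t ^ 2))
  -- the integral identity
  have hA : IntervalIntegrable (fun t : ℝ => Real.exp (z * t) * Real.sqrt (1 - t ^ 2))
      MeasureTheory.volume (-1) 1 := Continuous.intervalIntegrable (by continuity) _ _
  have hB : IntervalIntegrable (fun t : ℝ => t * Real.exp (z * t) * Real.sqrt (1 - t ^ 2))
      MeasureTheory.volume (-1) 1 := Continuous.intervalIntegrable (by continuity) _ _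
  have hkey := key_ibp z
  have hsplit : (∫ t in (-1:ℝ)..1, (2 * (Real.exp (z*t) * Real.sqrt (1 - t^2))
      + z * (t * Real.exp (z*t) * Real.sqrt (1 - t^2))
      - Real.exp (z*t) * (Real.sqrt (1 - t^2))⁻¹))
      = 2 * B1 z + z * (∫ t in (-1:ℝ)..1, t * Real.exp (z * t) * Real.sqrt (1 - t ^ 2))
        - (∫ t in (-1:ℝ)..1, Real.exp (z*t) * (Real.sqrt (1 - t^2))⁻¹) := by
    rw [intervalIntegral.integral_sub ((hA.const_mul 2).add (hB.const_mul z)) (exp_phi_intInt z),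
      intervalIntegral.integral_add (hA.const_mul 2) (hB.const_mul z),
      intervalIntegral.integral_const_mul, intervalIntegral.integral_const_mul]
    rfl
  have hB0 : B0 z = ∫ t in (-1:ℝ)..1, Real.exp (z*t) * (Real.sqrt (1 - t^2))⁻¹ := by
    apply intervalIntegral.integral_congr
    intro t ht
    rw [Set.uIcc_of_le (by norm_num : (-1:ℝ) ≤ 1)] at ht
    have h1 : (0:ℝ) ≤ 1 - t ^ 2 := by nlinarith [ht.1, ht.2]
    simp only [Real.rpow_neg h1, Real.sqrt_eq_rpow]
  rw [hsplit, ← hB0] at hkey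
  have : (B0 z - 2 * B1 z) / z
      = ∫ t in (-1:ℝ)..1, t * Real.exp (z * t) * Real.sqrt (1 - t ^ 2) := by
    field_simp
    linarith [hkey]
  rw [this]
  exact hd
end

section
/- (Riccati equation for the Bessel ratio, used in Step 4 of the proof of Theorem B.) Define R(z) = B₀(z)/(z·B₁(z)) for z > 0 (so R(z) = I₀(z)/I₁(z)). Then for every z > 0, R is differentiable at z with HasDerivAt R (1 − R(z)² + R(z)/z) z. -/
open intervalIntegral

/-- The Bessel ratio `R(z) = B₀(z)/(z·B₁(z)) = I₀(z)/I₁(z)`. -/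
noncomputable def Rb (z : ℝ) : ℝ := B0 z / (z * B1 z)

open MeasureTheory Set Metric Real

noncomputable def wfun (t : ℝ) : ℝ := (1 - t ^ 2) ^ (-(1 / 2) : ℝ)

lemma wfun_eq' (t : ℝ) : wfun t = (Real.sqrt (1 - t ^ 2))⁻¹ := by
  rcases lt_or_ge (1 - t ^ 2) 0 with h | h
  · rw [wfun, Real.rpow_def_of_neg h, Real.sqrt_eq_zero'.mpr h.le, inv_zero]
    have : Real.cos (-(1 / 2) * Real.pi) = 0 := by
      rw [show (-(1 / 2) * Real.pi : ℝ) = -(Real.pi / 2) by ring, Real.cos_neg,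
        Real.cos_pi_div_two]
    rw [this, mul_zero]
  · rw [wfun, Real.sqrt_eq_rpow, ← Real.rpow_neg h]

lemma wfun_meas : Measurable wfun := by
  have h : wfun = fun t => (Real.sqrt (1 - t ^ 2))⁻¹ := funext wfun_eq'
  rw [h]
  exact ((Real.continuous_sqrt.comp (by fun_prop)).measurable).inv

lemma wfun_nonneg_of (t : ℝ) (h : t ∈ Set.Ioc (-1 : ℝ) 1) : 0 ≤ wfun t := by
  have : (0:ℝ) ≤ 1 - t ^ 2 := by nlinarith [h.1, h.2]
  exact Real.rpow_nonneg this _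

lemma wfun_eq (t : ℝ) (_h : t ∈ Set.Ioo (-1 : ℝ) 1) :
    wfun t = (Real.sqrt (1 - t ^ 2))⁻¹ := wfun_eq' t

lemma wfun_int : IntervalIntegrable wfun volume (-1) 1 := by
  have h1 : IntervalIntegrable (fun s : ℝ => s ^ (-(1/2) : ℝ)) volume 0 1 :=
    intervalIntegrable_rpow' (by norm_num)
  have hub : IntervalIntegrable (fun t : ℝ => (1 - t) ^ (-(1/2) : ℝ)) volume 0 1 := by
    simpa using (h1.comp_sub_left 1).symm
  have hmeas : AEStronglyMeasurable wfun (volume.restrict (Set.uIoc (0:ℝ) 1)) :=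
    wfun_meas.aestronglyMeasurable
  have right : IntervalIntegrable wfun volume 0 1 := by
    refine hub.mono_fun hmeas ?_
    filter_upwards [ae_restrict_mem measurableSet_uIoc] with t ht
    rw [Set.uIoc_of_le (by norm_num : (0:ℝ) ≤ 1)] at ht
    have ht0 : 0 < t := ht.1
    have ht1 : t ≤ 1 := ht.2
    have hb : (0:ℝ) ≤ 1 - t ^ 2 := by nlinarith
    simp only [wfun]
    rw [Real.norm_eq_abs, Real.norm_eq_abs, abs_of_nonneg (Real.rpow_nonneg hb _),
      abs_of_nonneg (Real.rpow_nonneg (by linarith) _)]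
    rcases eq_or_lt_of_le ht1 with h | h
    · subst h; simp [wfun, Real.zero_rpow (by norm_num : (-(1/2):ℝ) ≠ 0)]
    · exact Real.rpow_le_rpow_of_nonpos (by linarith) (by nlinarith) (by norm_num)
  have left : IntervalIntegrable wfun volume (-1) 0 := by
    have := ((IntervalIntegrable.iff_comp_neg (by simp)).mp right).symm
    simp only [neg_zero] at this
    have heq : (fun x : ℝ => wfun (-x)) = wfun := by
      funext x; simp [wfun]
    rwa [heq] at this
  exact left.trans right

lemma int_exp_w (x : ℝ) :
    IntervalIntegrable (fun t => Real.exp (x * t) * wfun t) volume (-1) 1 :=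
  wfun_int.continuousOn_mul (Continuous.continuousOn (by fun_prop))

lemma int_t_exp_w (x : ℝ) :
    IntervalIntegrable (fun t => t * Real.exp (x * t) * wfun t) volume (-1) 1 := by
  have := wfun_int.continuousOn_mul
    (Continuous.continuousOn (f := fun t : ℝ => t * Real.exp (x * t)) (by fun_prop))
  simpa [mul_assoc] using this

lemma int_exp_s (x : ℝ) :
    IntervalIntegrable (fun t => Real.exp (x * t) * Real.sqrt (1 - t ^ 2)) volume (-1) 1 :=
  Continuous.intervalIntegrable (by fun_prop) _ _

lemma int_t_exp_s (x : ℝ) :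
    IntervalIntegrable (fun t => t * Real.exp (x * t) * Real.sqrt (1 - t ^ 2)) volume (-1) 1 :=
  Continuous.intervalIntegrable (by fun_prop) _ _

lemma hasDerivAt_B1_s9 (z : ℝ) :
    HasDerivAt B1 (∫ t in (-1:ℝ)..1, t * Real.exp (z * t) * Real.sqrt (1 - t ^ 2)) z := by
  have key := intervalIntegral.hasDerivAt_integral_of_dominated_loc_of_deriv_le
    (F := fun x t => Real.exp (x * t) * Real.sqrt (1 - t ^ 2))
    (F' := fun x t => t * Real.exp (x * t) * Real.sqrt (1 - t ^ 2))
    (x₀ := z) (a := (-1:ℝ)) (b := 1) (bound := fun _ => Real.exp (|z| + 1))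
    (s := ball z 1) (ball_mem_nhds z one_pos)
    (Filter.Eventually.of_forall fun x =>
      (Continuous.aestronglyMeasurable (by fun_prop)))
    (int_exp_s z)
    (Continuous.aestronglyMeasurable (by fun_prop))
    ?_ (intervalIntegrable_const) ?_
  · exact key.2
  · refine Filter.Eventually.of_forall fun t ht x hx => ?_
    rw [Set.uIoc_of_le (by norm_num : (-1:ℝ) ≤ 1)] at ht
    have ht1 : |t| ≤ 1 := abs_le.mpr ⟨ht.1.le, ht.2⟩
    have hx1 : |x| ≤ |z| + 1 := by
      have := mem_ball_iff_norm.mp hx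
      calc |x| ≤ |z| + |x - z| := by
            simpa using abs_add_le z (x - z)
        _ ≤ |z| + 1 := by simp only [Real.norm_eq_abs] at this; linarith
    have hs : Real.sqrt (1 - t ^ 2) ≤ 1 := Real.sqrt_le_one.mpr (by nlinarith)
    have hsn : 0 ≤ Real.sqrt (1 - t ^ 2) := Real.sqrt_nonneg _
    have hexp : Real.exp (x * t) ≤ Real.exp (|z| + 1) := by
      apply Real.exp_le_exp.mpr
      calc x * t ≤ |x * t| := le_abs_self _
        _ = |x| * |t| := abs_mul _ _
        _ ≤ (|z| + 1) * 1 := by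
            apply mul_le_mul hx1 ht1 (abs_nonneg _) (by positivity)
        _ = |z| + 1 := mul_one _
    rw [Real.norm_eq_abs, abs_mul, abs_mul, abs_of_nonneg (Real.exp_pos _).le,
      abs_of_nonneg hsn]
    calc |t| * Real.exp (x * t) * Real.sqrt (1 - t ^ 2)
        ≤ 1 * Real.exp (|z| + 1) * 1 := by
          apply mul_le_mul _ hs hsn (by positivity)
          exact mul_le_mul ht1 hexp (Real.exp_pos _).le (by norm_num)
      _ = Real.exp (|z| + 1) := by ring
  · refine Filter.Eventually.of_forall fun t _ x _ => ?_
    have h1 : HasDerivAt (fun y : ℝ => Real.exp (y * t)) (t * Real.exp (x * t)) x := by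
      have := (Real.hasDerivAt_exp (x * t)).comp x ((hasDerivAt_id x).mul_const t)
      simpa [mul_comm, Function.comp_def] using this
    simpa [mul_assoc] using h1.mul_const (Real.sqrt (1 - t ^ 2))

lemma hasDerivAt_B0_s9 (z : ℝ) :
    HasDerivAt B0 (∫ t in (-1:ℝ)..1, t * Real.exp (z * t) * wfun t) z := by
  have hm : ∀ x : ℝ, AEStronglyMeasurable (fun t => Real.exp (x * t) * wfun t)
      (volume.restrict (Set.uIoc (-1:ℝ) 1)) := fun x =>
    ((Real.continuous_exp.comp (continuous_const.mul continuous_id)).measurable.mul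
      wfun_meas).aestronglyMeasurable
  have key := intervalIntegral.hasDerivAt_integral_of_dominated_loc_of_deriv_le
    (F := fun x t => Real.exp (x * t) * wfun t)
    (F' := fun x t => t * Real.exp (x * t) * wfun t)
    (x₀ := z) (a := (-1:ℝ)) (b := 1) (bound := fun t => Real.exp (|z| + 1) * wfun t)
    (s := ball z 1) (ball_mem_nhds z one_pos)
    (Filter.Eventually.of_forall hm)
    (int_exp_w z)
    ((measurable_id.mul ((Real.continuous_exp.comp
        (continuous_const.mul continuous_id)).measurable)).mul wfun_meas).aestronglyMeasurable
    ?_ (wfun_int.const_mul _) ?_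
  · exact key.2
  · refine Filter.Eventually.of_forall fun t ht x hx => ?_
    rw [Set.uIoc_of_le (by norm_num : (-1:ℝ) ≤ 1)] at ht
    have ht1 : |t| ≤ 1 := abs_le.mpr ⟨ht.1.le, ht.2⟩
    have hwn : 0 ≤ wfun t := wfun_nonneg_of t ht
    have hx1 : |x| ≤ |z| + 1 := by
      have hb := mem_ball_iff_norm.mp hx
      calc |x| ≤ |z| + |x - z| := by simpa using abs_add_le z (x - z)
        _ ≤ |z| + 1 := by simp only [Real.norm_eq_abs] at hb; linarith
    have hexp : Real.exp (x * t) ≤ Real.exp (|z| + 1) := by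
      apply Real.exp_le_exp.mpr
      calc x * t ≤ |x * t| := le_abs_self _
        _ = |x| * |t| := abs_mul _ _
        _ ≤ (|z| + 1) * 1 := mul_le_mul hx1 ht1 (abs_nonneg _) (by positivity)
        _ = |z| + 1 := mul_one _
    rw [Real.norm_eq_abs, abs_mul, abs_mul, abs_of_nonneg (Real.exp_pos _).le,
      abs_of_nonneg hwn]
    have hb : |t| * Real.exp (x * t) ≤ Real.exp (|z| + 1) := by
      calc |t| * Real.exp (x * t) ≤ 1 * Real.exp (|z| + 1) :=
            mul_le_mul ht1 hexp (Real.exp_pos _).le (by norm_num)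
        _ = Real.exp (|z| + 1) := one_mul _
    exact mul_le_mul_of_nonneg_right hb hwn
  · refine Filter.Eventually.of_forall fun t _ x _ => ?_
    have h1 : HasDerivAt (fun y : ℝ => Real.exp (y * t)) (t * Real.exp (x * t)) x := by
      have := (Real.hasDerivAt_exp (x * t)).comp x ((hasDerivAt_id x).mul_const t)
      simpa [mul_comm, Function.comp_def] using this
    simpa [mul_assoc] using h1.mul_const (wfun t)

lemma sqrt_hasDerivAt {t : ℝ} (h : t ∈ Set.Ioo (-1:ℝ) 1) :
    HasDerivAt (fun s : ℝ => Real.sqrt (1 - s ^ 2)) (-t * (Real.sqrt (1 - t ^ 2))⁻¹) t := by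
  have h0 : (0:ℝ) < 1 - t ^ 2 := by nlinarith [h.1, h.2]
  have hin : HasDerivAt (fun s : ℝ => 1 - s ^ 2) (-(2 * t)) t := by
    simpa using ((hasDerivAt_pow 2 t).const_sub 1)
  have := (Real.hasDerivAt_sqrt h0.ne').comp t hin
  refine this.congr_deriv (Eq.symm ?_)
  have hs : Real.sqrt (1 - t ^ 2) ≠ 0 := by positivity
  field_simp

lemma B1_pos (z : ℝ) : 0 < B1 z := by
  refine intervalIntegral.intervalIntegral_pos_of_pos_on (int_exp_s z) ?_ (by norm_num)
  intro t ht
  exact mul_pos (Real.exp_pos _) (Real.sqrt_pos.2 (by nlinarith [ht.1, ht.2]))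

lemma identity1 (z : ℝ) :
    (∫ t in (-1:ℝ)..1, t * Real.exp (z * t) * wfun t) = z * B1 z := by
  set g : ℝ → ℝ := fun t => -(Real.exp (z * t) * Real.sqrt (1 - t ^ 2)) with hg
  have hcont : ContinuousOn g (Set.Icc (-1:ℝ) 1) := Continuous.continuousOn (by fun_prop)
  have hderiv : ∀ t ∈ Set.Ioo (-1:ℝ) 1, HasDerivAt g
      (t * Real.exp (z * t) * wfun t
        - z * (Real.exp (z * t) * Real.sqrt (1 - t ^ 2))) t := by
    intro t ht
    have h0 : (0:ℝ) < 1 - t ^ 2 := by nlinarith [ht.1, ht.2]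
    have hs : Real.sqrt (1 - t ^ 2) ≠ 0 := by positivity
    have hexp : HasDerivAt (fun s : ℝ => Real.exp (z * s)) (z * Real.exp (z * t)) t := by
      have := (Real.hasDerivAt_exp (z * t)).comp t ((hasDerivAt_id t).const_mul z)
      simpa [mul_comm, Function.comp_def] using this
    have hder := (hexp.mul (sqrt_hasDerivAt ht)).neg
    refine hder.congr_deriv (Eq.symm ?_)
    rw [wfun_eq t ht]
    have hsq : Real.sqrt (1 - t ^ 2) * Real.sqrt (1 - t ^ 2) = 1 - t ^ 2 :=
      Real.mul_self_sqrt h0.le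
    field_simp
    ring
  have hint : IntervalIntegrable (fun t => t * Real.exp (z * t) * wfun t
      - z * (Real.exp (z * t) * Real.sqrt (1 - t ^ 2))) volume (-1) 1 :=
    (int_t_exp_w z).sub ((int_exp_s z).const_mul z)
  have hftc := intervalIntegral.integral_eq_sub_of_hasDerivAt_of_le (by norm_num) hcont hderiv hint
  have hval : g 1 - g (-1) = 0 := by simp [hg]
  rw [hval] at hftc
  rw [intervalIntegral.integral_sub (int_t_exp_w z) ((int_exp_s z).const_mul z)] at hftc
  rw [intervalIntegral.integral_const_mul] at hftc
  have hB : (∫ t in (-1:ℝ)..1, Real.exp (z * t) * Real.sqrt (1 - t ^ 2)) = B1 z := rfl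
  rw [hB] at hftc
  linarith

lemma identity2 (z : ℝ) :
    z * (∫ t in (-1:ℝ)..1, t * Real.exp (z * t) * Real.sqrt (1 - t ^ 2))
      = B0 z - 2 * B1 z := by
  set g : ℝ → ℝ := fun t => Real.exp (z * t) * (t * Real.sqrt (1 - t ^ 2)) with hg
  have hcont : ContinuousOn g (Set.Icc (-1:ℝ) 1) := Continuous.continuousOn (by fun_prop)
  have hderiv : ∀ t ∈ Set.Ioo (-1:ℝ) 1, HasDerivAt g
      (z * (t * Real.exp (z * t) * Real.sqrt (1 - t ^ 2))
        + 2 * (Real.exp (z * t) * Real.sqrt (1 - t ^ 2))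
        - Real.exp (z * t) * wfun t) t := by
    intro t ht
    have h0 : (0:ℝ) < 1 - t ^ 2 := by nlinarith [ht.1, ht.2]
    have hs : Real.sqrt (1 - t ^ 2) ≠ 0 := by positivity
    have hexp : HasDerivAt (fun s : ℝ => Real.exp (z * s)) (z * Real.exp (z * t)) t := by
      have := (Real.hasDerivAt_exp (z * t)).comp t ((hasDerivAt_id t).const_mul z)
      simpa [mul_comm, Function.comp_def] using this
    have hts : HasDerivAt (fun s : ℝ => s * Real.sqrt (1 - s ^ 2))
        (1 * Real.sqrt (1 - t ^ 2) + t * (-t * (Real.sqrt (1 - t ^ 2))⁻¹)) t :=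
      (hasDerivAt_id t).mul (sqrt_hasDerivAt ht)
    have hder := hexp.mul hts
    refine hder.congr_deriv (Eq.symm ?_)
    rw [wfun_eq t ht]
    have hsq : Real.sqrt (1 - t ^ 2) * Real.sqrt (1 - t ^ 2) = 1 - t ^ 2 :=
      Real.mul_self_sqrt h0.le
    field_simp
    linear_combination hsq
  have hint : IntervalIntegrable (fun t =>
      z * (t * Real.exp (z * t) * Real.sqrt (1 - t ^ 2))
        + 2 * (Real.exp (z * t) * Real.sqrt (1 - t ^ 2))
        - Real.exp (z * t) * wfun t) volume (-1) 1 :=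
    (((int_t_exp_s z).const_mul z).add ((int_exp_s z).const_mul 2)).sub (int_exp_w z)
  have hftc := intervalIntegral.integral_eq_sub_of_hasDerivAt_of_le (by norm_num) hcont hderiv hint
  have hval : g 1 - g (-1) = 0 := by simp [hg]
  rw [hval] at hftc
  rw [intervalIntegral.integral_sub (((int_t_exp_s z).const_mul z).add
      ((int_exp_s z).const_mul 2)) (int_exp_w z),
    intervalIntegral.integral_add ((int_t_exp_s z).const_mul z) ((int_exp_s z).const_mul 2),
    intervalIntegral.integral_const_mul, intervalIntegral.integral_const_mul] at hftc
  have h1 : (∫ t in (-1:ℝ)..1, Real.exp (z * t) * Real.sqrt (1 - t ^ 2)) = B1 z := rfl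
  have h0 : (∫ t in (-1:ℝ)..1, Real.exp (z * t) * wfun t) = B0 z := rfl
  rw [h1, h0] at hftc
  linarith

/-- Riccati equation for the Bessel ratio: for `z > 0`,
`R′(z) = 1 − R(z)² + R(z)/z`. -/
theorem hasDerivAt_Rb (z : ℝ) (hz : 0 < z) :
    HasDerivAt Rb (1 - (Rb z) ^ 2 + Rb z / z) z := by
  have hB1p := B1_pos z
  have hC0 : z * B1 z ≠ 0 := by positivity
  have hB0' : HasDerivAt B0 (z * B1 z) z := identity1 z ▸ hasDerivAt_B0_s9 z
  have hC : HasDerivAt (fun y => y * B1 y) (B0 z - B1 z) z := by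
    have h2 := (hasDerivAt_id z).mul (hasDerivAt_B1_s9 z)
    simp only [id_eq, one_mul] at h2
    refine h2.congr_deriv (Eq.symm ?_)
    have hi2 := identity2 z
    linarith
  have H := hB0'.div hC hC0
  have hR : Rb = fun y => B0 y / (y * B1 y) := rfl
  rw [hR]
  refine H.congr_deriv (Eq.symm ?_)
  simp only [Rb]
  field_simp
  ring
end

section
/- (Kronecker factorization; the statable core of Theorem A.) Let P be a monic polynomial with integer coefficients such that every complex root of P (i.e. every root of the image of P in ℂ[X]) has absolute value exactly 1. Then P factors completely into cyclotomic polynomials: there exists a finite multiset S of positive natural numbers such that P = ∏_{n ∈ S} Φ_n in ℤ[X], where Φ_n denotes the n-th cyclotomic polynomial. -/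
open Polynomial

/-- Kronecker's theorem: a complex root of a monic integer polynomial all of whose
complex roots have absolute value one is a root of unity. -/
lemma kronecker_root_of_unity (P : Polynomial ℤ) (hP : P.Monic)
    (hroots : ∀ z : ℂ, (P.map (Int.castRingHom ℂ)).IsRoot z → ‖z‖ = 1)
    {z : ℂ} (hz : (P.map (Int.castRingHom ℂ)).IsRoot z) :
    ∃ n : ℕ, 0 < n ∧ z ^ n = 1 := by
  have hintz : IsIntegral ℤ z := by
    refine ⟨P, hP, ?_⟩
    rwa [← Polynomial.eval_map, algebraMap_int_eq] at *
  have hintQ : IsIntegral ℚ z := hintz.tower_top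
  let K := IntermediateField.adjoin ℚ ({z} : Set ℂ)
  haveI : FiniteDimensional ℚ K := IntermediateField.adjoin.finiteDimensional hintQ
  haveI : NumberField K := ⟨⟩
  set x : K := IntermediateField.AdjoinSimple.gen ℚ z with hx
  have halg : algebraMap K ℂ x = z := IntermediateField.AdjoinSimple.algebraMap_gen ℚ z
  have hxi : IsIntegral ℤ x := by
    rwa [← isIntegral_algebraMap_iff (algebraMap K ℂ).injective, halg]
  have haevalx : Polynomial.aeval x P = 0 := by
    apply (algebraMap K ℂ).injective
    rw [map_zero, ← Polynomial.aeval_algebraMap_apply, halg]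
    rwa [Polynomial.aeval_def, Polynomial.eval₂_eq_eval_map, algebraMap_int_eq] at *
  have hnorm : ∀ φ : K →+* ℂ, ‖φ x‖ = 1 := by
    intro φ
    have key : Polynomial.aeval (φ x) P = 0 := by
      have h2 : Polynomial.aeval (φ.toIntAlgHom x) P = φ.toIntAlgHom (Polynomial.aeval x P) :=
        Polynomial.aeval_algHom_apply φ.toIntAlgHom x P
      simpa [haevalx] using h2
    have hroot : (P.map (Int.castRingHom ℂ)).IsRoot (φ x) := by
      rw [Polynomial.IsRoot, Polynomial.eval_map, ← algebraMap_int_eq, ← Polynomial.aeval_def]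
      exact key
    simpa using hroots _ hroot
  obtain ⟨n, hn, hxn⟩ := NumberField.Embeddings.pow_eq_one_of_norm_eq_one K ℂ hxi hnorm
  refine ⟨n, hn, ?_⟩
  have := congrArg (algebraMap K ℂ) hxn
  rwa [map_pow, halg, map_one] at this

lemma kronecker_aux : ∀ d : ℕ, ∀ P : Polynomial ℤ, P.natDegree = d → P.Monic →
    (∀ z : ℂ, (P.map (Int.castRingHom ℂ)).IsRoot z → ‖z‖ = 1) →
    ∃ S : Multiset ℕ+, P = (S.map fun n => cyclotomic (n : ℕ) ℤ).prod := by
  intro d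
  induction d using Nat.strong_induction_on with
  | _ d ih =>
    intro P hdeg hP hroots
    rcases Nat.eq_zero_or_pos d with hd | hd
    · subst hd
      have : P = 1 := hP.natDegree_eq_zero.mp hdeg
      exact ⟨0, by simp [this]⟩
    · -- P has a complex root
      have hdegpos : 0 < (P.map (Int.castRingHom ℂ)).degree := by
        rw [Polynomial.degree_map_eq_of_injective (Int.castRingHom ℂ).injective_int,
          Polynomial.degree_eq_natDegree hP.ne_zero, hdeg]
        exact_mod_cast hd
      obtain ⟨z, hz⟩ := Complex.exists_root hdegpos
      obtain ⟨n, hn, hzn⟩ := kronecker_root_of_unity P hP hroots hz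
      -- z is a primitive root of unity of order m := orderOf z
      have hfin : IsOfFinOrder z := isOfFinOrder_iff_pow_eq_one.mpr ⟨n, hn, hzn⟩
      set m := orderOf z with hm
      have hmpos : 0 < m := hfin.orderOf_pos
      have hprim : IsPrimitiveRoot z m := IsPrimitiveRoot.orderOf z
      -- cyclotomic m ℤ divides P
      have hdvdQ : cyclotomic m ℚ ∣ P.map (Int.castRingHom ℚ) := by
        rw [cyclotomic_eq_minpoly_rat hprim hmpos]
        apply minpoly.dvd
        rw [Polynomial.aeval_def, ← Polynomial.eval_map, Polynomial.map_map]
        have : (Int.castRingHom ℂ) = (algebraMap ℚ ℂ).comp (Int.castRingHom ℚ) := by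
          ext1; simp
        rwa [← this]
      have hdvd : cyclotomic m ℤ ∣ P := by
        rw [← Polynomial.map_cyclotomic_int m ℚ] at hdvdQ
        exact (Polynomial.map_dvd_map (Int.castRingHom ℚ)
          (Int.castRingHom ℚ).injective_int (cyclotomic.monic m ℤ)).mp hdvdQ
      obtain ⟨Q, hPQ⟩ := hdvd
      have hQmonic : Q.Monic := ((cyclotomic.monic m ℤ).of_mul_monic_left (hPQ ▸ hP))
      have hcycdeg : (cyclotomic m ℤ).natDegree = Nat.totient m := natDegree_cyclotomic m ℤ
      have htotpos : 0 < Nat.totient m := Nat.totient_pos.mpr hmpos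
      have hdegQ : Q.natDegree = d - Nat.totient m := by
        have := Polynomial.natDegree_mul (cyclotomic_ne_zero m ℤ) hQmonic.ne_zero
        rw [← hPQ, hdeg, hcycdeg] at this
        omega
      have htotle : Nat.totient m ≤ d := by
        have := Polynomial.natDegree_mul (cyclotomic_ne_zero m ℤ) hQmonic.ne_zero
        rw [← hPQ, hdeg, hcycdeg] at this
        omega
      have hQroots : ∀ w : ℂ, (Q.map (Int.castRingHom ℂ)).IsRoot w → ‖w‖ = 1 := by
        intro w hw
        apply hroots
        rw [hPQ, Polynomial.map_mul, Polynomial.IsRoot, Polynomial.eval_mul,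
          hw.eq_zero, mul_zero]
      obtain ⟨S, hS⟩ := ih (d - Nat.totient m) (by omega) Q hdegQ hQmonic hQroots
      refine ⟨Nat.toPNat m hmpos ::ₘ S, ?_⟩
      rw [hPQ, hS]
      simp [Multiset.cons_bind, Multiset.singleton_add]
      exact Or.inl rfl

/-- Kronecker factorization (the statable core of Theorem A): a monic integer
polynomial all of whose complex roots have absolute value exactly 1 factors
completely into cyclotomic polynomials, i.e. it is the product of a finite
multiset of cyclotomic polynomials `Φ_n` with `n` a positive natural number. -/
theorem kronecker_cyclotomic_factorization (P : Polynomial ℤ) (hP : P.Monic)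
    (hroots : ∀ z : ℂ, (P.map (Int.castRingHom ℂ)).IsRoot z → ‖z‖ = 1) :
    ∃ S : Multiset ℕ+, P = (S.map fun n => cyclotomic (n : ℕ) ℤ).prod := by
  exact kronecker_aux P.natDegree P rfl hP hroots
end
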